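/- Let P(x) = (x-α₁)^{m₁}(x-α₂)^{m₂} with α₁ ≠ α₂. Then for 0 ≤ k₁ ≤ m₁-1, the Hermite interpolation polynomial L_{1,k₁}(x) equals ∑_{i=0}^{m₁-k₁-1} (-1)^i·C(m₂+i-1, m₂-1)/(α₁-α₂)^{m₂+i} · (x-α₁)^{i+k₁}·(x-α₂)^{m₂}, and symmetrically L_{2,k₂}(x) = ∑_{i=0}^{m₂-k₂-1} (-1)^i·C(m₁+i-1, m₁-1)/(α₂-α₁)^{m₁+i} · (x-α₁)^{m₁}·(x-α₂)^{i+k₂}. -/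

import Mathlib

open Polynomial Finset

private lemma dvd_of_derivs {F : Type*} [Field F] [CharZero F]
    (Q : F[X]) (α : F) (m : ℕ) (h : ∀ l < m, (Polynomial.derivative^[l] Q).eval α = 0) :
    (X - C α) ^ m ∣ Q := by
  rcases eq_or_ne Q 0 with rfl | hQ
  · exact dvd_zero _
  rcases Nat.eq_zero_or_pos m with rfl | hm
  · simp
  have hlt : m - 1 < Q.rootMultiplicity α := by
    rw [Polynomial.lt_rootMultiplicity_iff_isRoot_iterate_derivative hQ]
    exact fun l hl => h l (by omega)
  calc (X - C α) ^ m ∣ (X - C α) ^ (Q.rootMultiplicity α) := pow_dvd_pow _ (by omega)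
    _ ∣ Q := Q.pow_rootMultiplicity_dvd α

private lemma series_inv {F : Type*} [Field F] (β : F) (hβ : β ≠ 0) (m : ℕ) (hm : 0 < m) :
    (PowerSeries.X + PowerSeries.C β) ^ m *
      PowerSeries.mk (fun i => (-1 : F) ^ i * ((m - 1 + i).choose (m - 1) : F) / β ^ (m + i))
      = 1 := by
  set c : F := -β⁻¹ with hc
  have h0 : (PowerSeries.mk fun i => ((m - 1 + i).choose (m - 1) : F)) *
      (1 - PowerSeries.X) ^ m = 1 := by
    have h := (PowerSeries.invOneSubPow F m).val_inv
    rwa [PowerSeries.invOneSubPow_val_eq_mk_sub_one_add_choose_of_pos F m hm,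
      PowerSeries.invOneSubPow_inv_eq_one_sub_pow] at h
  have h1 := congrArg (PowerSeries.rescale c) h0
  rw [map_mul, map_pow, map_sub, map_one] at h1
  have hX : PowerSeries.rescale c PowerSeries.X = PowerSeries.C c * PowerSeries.X := by
    ext n
    by_cases hn : n = 1 <;>
      simp [PowerSeries.coeff_rescale, PowerSeries.coeff_X, PowerSeries.coeff_C_mul, hn]
  rw [hX] at h1
  have hfac : PowerSeries.X + PowerSeries.C β =
      PowerSeries.C β * (1 - PowerSeries.C c * PowerSeries.X) := by
    have hbc : β * c = -1 := by rw [hc, mul_neg, mul_inv_cancel₀ hβ]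
    rw [mul_sub, mul_one, ← mul_assoc, ← map_mul, hbc, map_neg, map_one, neg_one_mul,
      sub_neg_eq_add, add_comm]
  have hmk : PowerSeries.mk (fun i => (-1 : F) ^ i * ((m - 1 + i).choose (m - 1) : F) / β ^ (m + i))
      = PowerSeries.C (β⁻¹ ^ m) *
        PowerSeries.rescale c (PowerSeries.mk fun i => ((m - 1 + i).choose (m - 1) : F)) := by
    ext n
    rw [PowerSeries.coeff_C_mul, PowerSeries.coeff_rescale, PowerSeries.coeff_mk,
      PowerSeries.coeff_mk, hc, div_eq_mul_inv, ← inv_pow, pow_add, neg_pow]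
    ring
  rw [hfac, hmk, mul_pow, map_pow]
  calc (PowerSeries.C β) ^ m * (1 - PowerSeries.C c * PowerSeries.X) ^ m *
        ((PowerSeries.C β⁻¹) ^ m *
          PowerSeries.rescale c (PowerSeries.mk fun i => ((m - 1 + i).choose (m - 1) : F)))
      = ((PowerSeries.C β) ^ m * (PowerSeries.C β⁻¹) ^ m) *
        (PowerSeries.rescale c (PowerSeries.mk fun i => ((m - 1 + i).choose (m - 1) : F)) *
          (1 - PowerSeries.C c * PowerSeries.X) ^ m) := by ring
    _ = 1 := by
        rw [h1, mul_one, ← mul_pow, ← map_mul, mul_inv_cancel₀ hβ, map_one, one_pow]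

private lemma key_dvd {F : Type*} [Field F] (β : F) (hβ : β ≠ 0) (m M : ℕ) (hm : 0 < m) :
    (X : F[X]) ^ M ∣
      (∑ i ∈ range M, C ((-1 : F) ^ i * ((m - 1 + i).choose (m - 1) : F) / β ^ (m + i)) * X ^ i) *
        (X + C β) ^ m - 1 := by
  set a : ℕ → F := fun i => (-1 : F) ^ i * ((m - 1 + i).choose (m - 1) : F) / β ^ (m + i) with ha
  rw [Polynomial.X_pow_dvd_iff]
  intro d hd
  rw [← Polynomial.coeff_coe]
  have hcast : (((∑ i ∈ range M, C (a i) * X ^ i) * (X + C β) ^ m - 1 : F[X]) : PowerSeries F)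
      = (((∑ i ∈ range M, C (a i) * X ^ i : F[X]) : PowerSeries F) - PowerSeries.mk a) *
          (PowerSeries.X + PowerSeries.C β) ^ m := by
    push_cast
    rw [sub_mul, mul_comm (PowerSeries.mk a)]
    rw [series_inv β hβ m hm]
  rw [hcast]
  have hdvd : (PowerSeries.X : PowerSeries F) ^ M ∣
      (((∑ i ∈ range M, C (a i) * X ^ i : F[X]) : PowerSeries F) - PowerSeries.mk a) := by
    rw [PowerSeries.X_pow_dvd_iff]
    intro j hj
    rw [map_sub, Polynomial.coeff_coe, PowerSeries.coeff_mk]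
    rw [Polynomial.finset_sum_coeff]
    simp only [Polynomial.coeff_C_mul, Polynomial.coeff_X_pow]
    rw [Finset.sum_eq_single j]
    · simp
    · intro i _ hij; simp [Ne.symm hij]
    · intro hjm; exact absurd (Finset.mem_range.mpr hj) hjm
  have := dvd_mul_of_dvd_left hdvd ((PowerSeries.X + PowerSeries.C β) ^ m)
  rw [PowerSeries.X_pow_dvd_iff] at this
  exact this d hd

private lemma key_dvd_shift {F : Type*} [Field F] (α γ : F) (hne : α ≠ γ) (m M : ℕ) (hm : 0 < m) :
    ((X : F[X]) - C α) ^ M ∣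
      (∑ i ∈ range M,
          C ((-1 : F) ^ i * ((m - 1 + i).choose (m - 1) : F) / (α - γ) ^ (m + i)) * (X - C α) ^ i) *
        (X - C γ) ^ m - 1 := by
  have h := key_dvd (α - γ) (sub_ne_zero.mpr hne) m M hm
  have h2 := map_dvd (aeval (X - C α : F[X])) h
  simp only [map_sub, map_add, map_mul, map_pow, map_sum, map_one, aeval_X, aeval_C,
    Polynomial.algebraMap_eq] at h2
  rwa [show (X : F[X]) - C α + (C α - C γ) = X - C γ from by ring] at h2

private lemma hermite_explicit {F : Type*} [Field F] [CharZero F]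
    (α γ : F) (hne : α ≠ γ) (a b : ℕ) (hb : 0 < b) (L : F[X]) (k : ℕ) (hk : k < a)
    (hdeg : L.degree < ((a + b : ℕ) : WithBot ℕ))
    (h1 : ∀ l < a, (Polynomial.derivative^[l] L).eval α = if l = k then (l.factorial : F) else 0)
    (h2 : ∀ l < b, (Polynomial.derivative^[l] L).eval γ = 0) :
    L = ∑ i ∈ range (a - k),
        C ((-1 : F) ^ i * ((b + i - 1).choose (b - 1) : F) / (α - γ) ^ (b + i)) *
          ((X - C α) ^ (i + k) * (X - C γ) ^ b) := by
  set R : F[X] := ∑ i ∈ range (a - k),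
      C ((-1 : F) ^ i * ((b + i - 1).choose (b - 1) : F) / (α - γ) ^ (b + i)) *
        ((X - C α) ^ (i + k) * (X - C γ) ^ b) with hR
  -- factorization of R
  have hRfac : R = (X - C α) ^ k *
      ((∑ i ∈ range (a - k),
          C ((-1 : F) ^ i * ((b - 1 + i).choose (b - 1) : F) / (α - γ) ^ (b + i)) * (X - C α) ^ i) *
        (X - C γ) ^ b) := by
    rw [hR, Finset.sum_mul, Finset.mul_sum]
    refine Finset.sum_congr rfl fun i _ => ?_
    rw [show b + i - 1 = b - 1 + i from by omega, pow_add]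
    ring
  -- (X - C α)^a divides L - R
  have e1 : (X - C α) ^ a ∣ L - (X - C α) ^ k := by
    apply dvd_of_derivs
    intro l hl
    have hder : (Polynomial.derivative^[l] ((X - C α) ^ k)).eval α
        = if l = k then (l.factorial : F) else 0 := by
      rw [Polynomial.iterate_derivative_X_sub_pow, nsmul_eq_mul, eval_mul, eval_natCast,
        eval_pow, eval_sub, eval_X, eval_C, sub_self]
      rcases lt_trichotomy l k with h | h | h
      · rw [zero_pow (by omega), mul_zero, if_neg (by omega)]
      · subst h
        rw [Nat.sub_self, pow_zero, mul_one, if_pos rfl, Nat.descFactorial_self]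
      · rw [if_neg (by omega), Nat.descFactorial_eq_zero_iff_lt.mpr h, Nat.cast_zero, zero_mul]
    rw [Polynomial.iterate_derivative_sub, eval_sub, h1 l hl, hder, sub_self]
  have e2 : (X - C α) ^ a ∣ R - (X - C α) ^ k := by
    have : R - (X - C α) ^ k = (X - C α) ^ k *
        ((∑ i ∈ range (a - k),
            C ((-1 : F) ^ i * ((b - 1 + i).choose (b - 1) : F) / (α - γ) ^ (b + i)) *
              (X - C α) ^ i) * (X - C γ) ^ b - 1) := by
      rw [mul_sub, mul_one, ← hRfac]
    have h3 := mul_dvd_mul (dvd_refl ((X - C α) ^ k)) (key_dvd_shift α γ hne b (a - k) hb)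
    rw [← pow_add, Nat.add_sub_cancel' hk.le] at h3
    rw [this]; exact h3
  have hdvd1 : (X - C α) ^ a ∣ L - R := by
    have : L - R = (L - (X - C α) ^ k) - (R - (X - C α) ^ k) := by ring
    rw [this]; exact dvd_sub e1 e2
  -- (X - C γ)^b divides L - R
  have hdvd2 : (X - C γ) ^ b ∣ L - R := by
    apply dvd_sub
    · exact dvd_of_derivs L γ b h2
    · apply Finset.dvd_sum
      intro i _
      rw [show C ((-1 : F) ^ i * ((b + i - 1).choose (b - 1) : F) / (α - γ) ^ (b + i)) *
          ((X - C α) ^ (i + k) * (X - C γ) ^ b)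
          = (C ((-1 : F) ^ i * ((b + i - 1).choose (b - 1) : F) / (α - γ) ^ (b + i)) *
            (X - C α) ^ (i + k)) * (X - C γ) ^ b from by ring]
      exact dvd_mul_left _ _
  -- combine via coprimality
  have hcop : IsCoprime ((X - C α) ^ a) ((X - C γ) ^ b) :=
    (isCoprime_X_sub_C_of_isUnit_sub (sub_ne_zero.mpr hne).isUnit).pow
  have hdvd : (X - C α) ^ a * (X - C γ) ^ b ∣ L - R := hcop.mul_dvd hdvd1 hdvd2
  -- degree bounds
  have hdegR : R.degree < ((a + b : ℕ) : WithBot ℕ) := by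
    rw [hR]
    refine lt_of_le_of_lt (Polynomial.degree_sum_le _ _) ?_
    rw [Finset.sup_lt_iff (by exact WithBot.bot_lt_coe _)]
    intro i hi
    have hi' : i < a - k := Finset.mem_range.mp hi
    have hterm : ((X - C α) ^ (i + k) * (X - C γ) ^ b).degree = ((i + k + b : ℕ) : WithBot ℕ) := by
      rw [Polynomial.degree_mul, Polynomial.degree_pow, Polynomial.degree_pow,
        Polynomial.degree_X_sub_C, Polynomial.degree_X_sub_C]
      simp
    calc (C ((-1 : F) ^ i * ((b + i - 1).choose (b - 1) : F) / (α - γ) ^ (b + i)) *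
          ((X - C α) ^ (i + k) * (X - C γ) ^ b)).degree
        ≤ (C ((-1 : F) ^ i * ((b + i - 1).choose (b - 1) : F) / (α - γ) ^ (b + i))).degree +
            ((X - C α) ^ (i + k) * (X - C γ) ^ b).degree := Polynomial.degree_mul_le _ _
      _ ≤ 0 + ((i + k + b : ℕ) : WithBot ℕ) := by
          rw [hterm]; exact add_le_add Polynomial.degree_C_le le_rfl
      _ = ((i + k + b : ℕ) : WithBot ℕ) := zero_add _
      _ < ((a + b : ℕ) : WithBot ℕ) := by exact_mod_cast (by omega : i + k + b < a + b)
  have hD : L - R = 0 := by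
    by_contra hne0
    have hle := Polynomial.degree_le_of_dvd hdvd hne0
    have hdegP : ((X - C α) ^ a * (X - C γ) ^ b).degree = ((a + b : ℕ) : WithBot ℕ) := by
      rw [Polynomial.degree_mul, Polynomial.degree_pow, Polynomial.degree_pow,
        Polynomial.degree_X_sub_C, Polynomial.degree_X_sub_C]
      simp
    have hlt : (L - R).degree < ((a + b : ℕ) : WithBot ℕ) :=
      lt_of_le_of_lt (Polynomial.degree_sub_le _ _) (max_lt hdeg hdegR)
    rw [hdegP] at hle
    exact absurd (lt_of_le_of_lt hle hlt) (lt_irrefl _)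
  exact sub_eq_zero.mp hD

/-- For `P(x) = (x-α₁)^{m₁}(x-α₂)^{m₂}` with `α₁ ≠ α₂`, the
Hermite interpolation polynomials are given explicitly by
`L_{1,k₁} = ∑_{i=0}^{m₁-k₁-1} (-1)^i C(m₂+i-1,m₂-1)/(α₁-α₂)^{m₂+i} (x-α₁)^{i+k₁}(x-α₂)^{m₂}`
and symmetrically for `L_{2,k₂}`. -/
theorem stmt10 {F : Type*} [Field F] [CharZero F] (α₁ α₂ : F) (hne : α₁ ≠ α₂)
    (m₁ m₂ : ℕ) (hm₁ : 0 < m₁) (hm₂ : 0 < m₂) (n : ℕ) (hn : n = m₁ + m₂)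
    (L₁ L₂ : ℕ → F[X])
    (hdeg₁ : ∀ k < m₁, (L₁ k).degree < n)
    (hdeg₂ : ∀ k < m₂, (L₂ k).degree < n)
    (hL₁₁ : ∀ k < m₁, ∀ l < m₁,
      (Polynomial.derivative^[l] (L₁ k)).eval α₁ = if l = k then (l.factorial : F) else 0)
    (hL₁₂ : ∀ k < m₁, ∀ l < m₂, (Polynomial.derivative^[l] (L₁ k)).eval α₂ = 0)
    (hL₂₂ : ∀ k < m₂, ∀ l < m₂,
      (Polynomial.derivative^[l] (L₂ k)).eval α₂ = if l = k then (l.factorial : F) else 0)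
    (hL₂₁ : ∀ k < m₂, ∀ l < m₁, (Polynomial.derivative^[l] (L₂ k)).eval α₁ = 0) :
    (∀ k₁ < m₁, L₁ k₁ = ∑ i ∈ Finset.range (m₁ - k₁),
        C ((-1 : F) ^ i * ((m₂ + i - 1).choose (m₂ - 1) : F) / (α₁ - α₂) ^ (m₂ + i)) *
          ((X - C α₁) ^ (i + k₁) * (X - C α₂) ^ m₂)) ∧
    (∀ k₂ < m₂, L₂ k₂ = ∑ i ∈ Finset.range (m₂ - k₂),
        C ((-1 : F) ^ i * ((m₁ + i - 1).choose (m₁ - 1) : F) / (α₂ - α₁) ^ (m₁ + i)) *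
          ((X - C α₁) ^ m₁ * (X - C α₂) ^ (i + k₂))) := by
  subst hn
  constructor
  · intro k hk
    exact hermite_explicit α₁ α₂ hne m₁ m₂ hm₂ (L₁ k) k hk (hdeg₁ k hk)
      (hL₁₁ k hk) (hL₁₂ k hk)
  · intro k hk
    have h := hermite_explicit α₂ α₁ hne.symm m₂ m₁ hm₁ (L₂ k) k hk
      (by rw [Nat.add_comm m₂ m₁]; exact hdeg₂ k hk) (hL₂₂ k hk) (hL₂₁ k hk)
    rw [h]
    exact Finset.sum_congr rfl fun i _ => by ring
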